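/- If (U,R) is a rational reconstruction of A = Σ_{i=0}^D a_i x^i modulo x^{D+1} with max(deg U, deg R + 1) ≤ N_2, then there exists a univariate polynomial Q ∈ K[x] such that Q·U_v = U and Q·R_v = R, where U_v = P_v(1,x) and R_v is the remainder of A·P_v(1,x) divided by x^{D+1}. -/

import Mathlib

/-- Pad a finite vector to a function on `ℕ` by zeros. -/
noncomputable def pad {K : Type*} [Zero K] {n : ℕ} (c : Fin n → K) : ℕ → K :=
  fun i => if h : i < n then c ⟨i, h⟩ else 0

/-- The Hankel matrix `H^k_a ∈ K^{(D-k+1)×(k+1)}` with `(i,j)` entry `a_{i+j}`. -/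
noncomputable def hankel {K : Type*} [Field K] (a : ℕ → K) (D k : ℕ) :
    Matrix (Fin (D - k + 1)) (Fin (k + 1)) K :=
  fun i j => a (i.1 + j.1)

/-- The binary form `P_v = ∑ v_i x^i y^{n-i}`. -/
noncomputable def binForm (K : Type*) [Field K] (v : ℕ → K) (n : ℕ) :
    MvPolynomial (Fin 2) K :=
  ∑ i ∈ Finset.range (n + 1),
    MvPolynomial.C (v i) * MvPolynomial.X 0 ^ i * MvPolynomial.X 1 ^ (n - i)


section Helpers
open Polynomial Finset

lemma coeff_sumCX {K : Type*} [Field K] (b : ℕ → K) (n m : ℕ) :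
    (∑ i ∈ range n, C (b i) * X ^ i).coeff m = if m < n then b m else 0 := by
  rw [finset_sum_coeff]
  simp only [coeff_C_mul, coeff_X_pow, mul_ite, mul_one, mul_zero]
  rw [Finset.sum_ite_eq (range n) m b]
  simp [Finset.mem_range]

lemma natDegree_sumCX_le {K : Type*} [Field K] (b : ℕ → K) (n : ℕ) (e : ℕ → ℕ) (d : ℕ)
    (he : ∀ i, i < n → e i ≤ d) :
    (∑ i ∈ range n, C (b i) * X ^ (e i)).natDegree ≤ d := by
  apply Polynomial.natDegree_sum_le_of_forall_le
  intro i hi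
  refine le_trans (natDegree_mul_le) ?_
  simp only [natDegree_C, natDegree_X_pow, zero_add]
  exact he i (Finset.mem_range.mp hi)

lemma coeffA_mul {K : Type*} [Field K] (a : ℕ → K) (D k m : ℕ)
    (W : Polynomial K) (hW : W.natDegree ≤ k) (hkm : k ≤ m) (hmD : m ≤ D) :
    ((∑ i ∈ range (D+1), C (a i) * X ^ i) * W).coeff m
      = ∑ j : Fin (k+1), a (m - k + j.1) * W.coeff (k - j.1) := by
  rw [Polynomial.coeff_mul, Finset.Nat.sum_antidiagonal_eq_sum_range_succ_mk]
  have h1 : ∀ j ∈ range (m+1),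
      (∑ i ∈ range (D+1), C (a i) * X ^ i).coeff j * W.coeff (m - j)
      = a j * W.coeff (m - j) := by
    intro j hj
    rw [coeff_sumCX, if_pos]
    simp only [Finset.mem_range] at hj; omega
  rw [Finset.sum_congr rfl h1]
  have h2 : ∑ j ∈ range (m+1), a j * W.coeff (m - j)
      = ∑ j ∈ Finset.Ico (m - k) (m+1), a j * W.coeff (m - j) := by
    symm
    apply Finset.sum_subset
    · intro x hx; simp only [Finset.mem_Ico] at hx; simp only [Finset.mem_range]; omega
    · intro x hx hx'
      simp only [Finset.mem_range] at hx
      simp only [Finset.mem_Ico, not_and, not_le] at hx'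
      have : k < m - x := by omega
      rw [coeff_eq_zero_of_natDegree_lt (lt_of_le_of_lt hW this), mul_zero]
  rw [h2, Finset.sum_Ico_eq_sum_range]
  have h3 : m + 1 - (m - k) = k + 1 := by omega
  rw [h3, Fin.sum_univ_eq_sum_range (fun j => a (m - k + j) * W.coeff (k - j))]
  apply Finset.sum_congr rfl
  intro i hi
  simp only [Finset.mem_range] at hi
  congr 2 <;> omega

lemma kernel_coeff_zero {K : Type*} [Field K] (a : ℕ → K) (D k : ℕ) (hk : k ≤ D)
    (W : Polynomial K) (hW : W.natDegree ≤ k)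
    (hker : (hankel a D k).mulVec (fun j => W.coeff (k - j.1)) = 0) :
    ∀ m, k ≤ m → m ≤ D →
      ((∑ i ∈ range (D+1), C (a i) * X ^ i) * W).coeff m = 0 := by
  intro m hkm hmD
  rw [coeffA_mul a D k m W hW hkm hmD]
  have := congrFun hker ⟨m - k, by omega⟩
  simpa [Matrix.mulVec, dotProduct, hankel] using this

lemma coeff_zero_kernel {K : Type*} [Field K] (a : ℕ → K) (D k : ℕ) (hk : k ≤ D)
    (W : Polynomial K) (hW : W.natDegree ≤ k)
    (hz : ∀ m, k ≤ m → m ≤ D →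
      ((∑ i ∈ range (D+1), C (a i) * X ^ i) * W).coeff m = 0) :
    (hankel a D k).mulVec (fun j => W.coeff (k - j.1)) = 0 := by
  funext i
  have hi : i.1 ≤ D - k := by omega
  have := hz (k + i.1) (by omega) (by omega)
  rw [coeffA_mul a D k (k + i.1) W hW (by omega) (by omega)] at this
  have e : k + i.1 - k = i.1 := by omega
  rw [e] at this
  simpa [Matrix.mulVec, dotProduct, hankel] using this

lemma aeval_binForm {K : Type*} [Field K] (w : ℕ → K) (n : ℕ) :
    MvPolynomial.aeval ![(1 : Polynomial K), X] (binForm K w n)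
      = ∑ i ∈ range (n+1), C (w i) * X ^ (n - i) := by
  simp [binForm, MvPolynomial.algebraMap_eq, algebraMap_eq]

lemma sum_rev {K : Type*} [Field K] (w : ℕ → K) (n : ℕ) :
    ∑ i ∈ range (n+1), C (w i) * X ^ (n - i)
      = ∑ i ∈ range (n+1), C (w (n - i)) * X ^ i := by
  rw [← Finset.sum_range_reflect]
  apply Finset.sum_congr rfl
  intro i hi
  simp only [Finset.mem_range] at hi
  congr 2 <;> omega

end Helpers

/-- Any low-degree rational reconstruction of `A` mod `x^{D+1}` is a multiple of `(U_v, R_v)`. -/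
theorem stmt10 {K : Type*} [Field K] (D N₁ N₂ : ℕ) (a : ℕ → K)
    (hN : N₁ ≤ N₂) (hsum : N₁ + N₂ = D)
    (hdim : ∀ k, 1 ≤ k → k ≤ D →
      Module.finrank K (LinearMap.ker ((hankel a D k).mulVecLin))
        = max 0 (k - N₁) + max 0 (k - N₂))
    (v : Fin (N₁ + 2) → K)
    (hv : (hankel a D (N₁ + 1)).mulVec v = 0) (hv0 : v ≠ 0)
    (hvgen : ∀ k, N₁ < k → k ≤ N₂ → ∀ u : Fin (k + 1) → K,
        (hankel a D k).mulVec u = 0 →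
        ∃ μ : Fin (k - N₁) → K,
          binForm K (pad u) k
            = binForm K (pad μ) (k - N₁ - 1) * binForm K (pad v) (N₁ + 1))
    (A U R : Polynomial K)
    (hA : A = ∑ i ∈ Finset.range (D + 1), Polynomial.C (a i) * Polynomial.X ^ i)
    (hrec : (Polynomial.X : Polynomial K) ^ (D + 1) ∣ (A * U - R))
    (hdeg : max U.natDegree (R.natDegree + 1) ≤ N₂) :
    ∃ Q : Polynomial K,
      Q * (∑ i ∈ Finset.range (N₁ + 2),
            Polynomial.C (pad v (N₁ + 1 - i)) * Polynomial.X ^ i) = U ∧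
      Q * ((A * ∑ i ∈ Finset.range (N₁ + 2),
            Polynomial.C (pad v (N₁ + 1 - i)) * Polynomial.X ^ i)
          % (Polynomial.X : Polynomial K) ^ (D + 1)) = R := by
  classical
  have hN2pos : 1 ≤ N₂ := by
    by_contra h
    have := le_trans (le_max_right _ _) hdeg
    omega
  have hDk : N₂ ≤ D := by omega
  have hUdeg : U.natDegree ≤ N₂ := le_trans (le_max_left _ _) hdeg
  have hRdeg : R.natDegree + 1 ≤ N₂ := le_trans (le_max_right _ _) hdeg
  set Uv : Polynomial K := ∑ i ∈ Finset.range (N₁ + 2),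
      Polynomial.C (pad v (N₁ + 1 - i)) * Polynomial.X ^ i with hUvdef
  -- coefficients of A*U vanish in [N₂, D]
  have hAU : ∀ m, N₂ ≤ m → m ≤ D → (A * U).coeff m = 0 := by
    intro m h1 h2
    have hd := (Polynomial.X_pow_dvd_iff).mp hrec m (by omega)
    rw [Polynomial.coeff_sub] at hd
    have hR0 : R.coeff m = 0 := Polynomial.coeff_eq_zero_of_natDegree_lt (by omega)
    rw [hR0, sub_zero] at hd
    exact hd
  have hkerU : (hankel a D N₂).mulVec
      (fun j : Fin (N₂ + 1) => U.coeff (N₂ - j.1)) = 0 := by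
    apply coeff_zero_kernel a D N₂ hDk U hUdeg
    intro m h1 h2
    have := hAU m h1 h2
    rwa [hA] at this
  rcases Nat.lt_or_ge N₁ N₂ with hlt | hge
  · -- main case N₁ < N₂
    obtain ⟨μ, hμ⟩ := hvgen N₂ hlt le_rfl _ hkerU
    have hψ := congrArg (MvPolynomial.aeval ![(1 : Polynomial K), Polynomial.X]) hμ
    rw [map_mul, aeval_binForm, aeval_binForm, aeval_binForm] at hψ
    set Q : Polynomial K := ∑ i ∈ Finset.range (N₂ - N₁ - 1 + 1),
        Polynomial.C (pad μ i) * Polynomial.X ^ (N₂ - N₁ - 1 - i) with hQdef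
    have hL : (∑ i ∈ Finset.range (N₂ + 1),
        Polynomial.C (pad (fun j : Fin (N₂ + 1) => U.coeff (N₂ - j.1)) i)
          * Polynomial.X ^ (N₂ - i)) = U := by
      rw [sum_rev]
      conv_rhs => rw [U.as_sum_range' (N₂ + 1) (by omega)]
      apply Finset.sum_congr rfl
      intro i hi
      simp only [Finset.mem_range] at hi
      rw [Polynomial.C_mul_X_pow_eq_monomial]
      congr 1
      have e1 : N₂ - (N₂ - i) = i := by omega
      unfold pad
      rw [dif_pos (by omega : N₂ - i < N₂ + 1)]
      show U.coeff (N₂ - (N₂ - i)) = U.coeff i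
      rw [e1]
    have hV : (∑ i ∈ Finset.range (N₁ + 1 + 1),
        Polynomial.C (pad v i) * Polynomial.X ^ (N₁ + 1 - i)) = Uv := by
      rw [sum_rev]
    rw [hL, hV] at hψ
    have hQU : Q * Uv = U := hψ.symm
    -- Rv
    have hmonic : (Polynomial.X ^ (D + 1) : Polynomial K).Monic :=
      (Polynomial.monic_X_pow _)
    set Rv : Polynomial K := (A * Uv) %ₘ (Polynomial.X ^ (D + 1)) with hRvdef
    have hmodeq : (A * Uv) % (Polynomial.X : Polynomial K) ^ (D + 1) = Rv := by
      rw [Polynomial.mod_def]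
      simp [Polynomial.leadingCoeff_X_pow]
      exact hRvdef.symm
    have hdvd1 : (Polynomial.X : Polynomial K) ^ (D + 1) ∣ (A * Uv - Rv) := by
      rw [hRvdef, Polynomial.modByMonic_eq_sub_mul_div _ _]
      exact ⟨(A * Uv) /ₘ (Polynomial.X ^ (D + 1)), by ring⟩
    have hUvdeg : Uv.natDegree ≤ N₁ + 1 := by
      rw [hUvdef]
      apply natDegree_sumCX_le
      intro i hi
      omega
    have hkerV : (hankel a D (N₁ + 1)).mulVec
        (fun j : Fin (N₁ + 1 + 1) => Uv.coeff (N₁ + 1 - j.1)) = 0 := by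
      have he : (fun j : Fin (N₁ + 1 + 1) => Uv.coeff (N₁ + 1 - j.1)) = v := by
        funext j
        have h1 : N₁ + 1 - j.1 < N₁ + 2 := by omega
        have e1 : N₁ + 1 - (N₁ + 1 - j.1) = j.1 := by omega
        rw [hUvdef, coeff_sumCX, if_pos h1, e1]
        unfold pad
        rw [dif_pos j.2]
      rw [he]
      exact hv
    have hAUv : ∀ m, N₁ + 1 ≤ m → m ≤ D → (A * Uv).coeff m = 0 := by
      intro m h1 h2
      have := kernel_coeff_zero a D (N₁ + 1) (by omega) Uv hUvdeg hkerV m h1 h2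
      rwa [← hA] at this
    have hRvcoeff : ∀ m, m ≤ D → Rv.coeff m = (A * Uv).coeff m := by
      intro m hm
      have := (Polynomial.X_pow_dvd_iff).mp hdvd1 m (by omega)
      rw [Polynomial.coeff_sub, sub_eq_zero] at this
      exact this.symm
    have hRvdeg : Rv.natDegree ≤ N₁ := by
      rcases eq_or_ne Rv 0 with h | h
      · simp [h]
      have hdlt : Rv.natDegree < D + 1 := by
        have := Polynomial.degree_modByMonic_lt (A * Uv) hmonic
        rw [← hRvdef, Polynomial.degree_X_pow] at this
        exact (Polynomial.natDegree_lt_iff_degree_lt h).mpr this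
      rw [Polynomial.natDegree_le_iff_coeff_eq_zero]
      intro m hm
      rcases Nat.lt_or_ge m (D + 1) with h2 | h2
      · rw [hRvcoeff m (by omega)]
        exact hAUv m (by omega) (by omega)
      · exact Polynomial.coeff_eq_zero_of_natDegree_lt (by omega)
    have hQdeg : Q.natDegree ≤ N₂ - N₁ - 1 := by
      rw [hQdef]
      apply natDegree_sumCX_le
      intro i hi
      omega
    refine ⟨Q, hQU, ?_⟩
    rw [hmodeq]
    have hdvd2 : (Polynomial.X : Polynomial K) ^ (D + 1) ∣ (Q * Rv - R) := by
      have he : Q * Rv - R = Q * (Rv - A * Uv) + (A * U - R) := by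
        rw [← hQU]; ring
      rw [he]
      apply dvd_add _ hrec
      apply Dvd.dvd.mul_left _ Q
      have := dvd_neg.mpr hdvd1
      rwa [neg_sub] at this
    have hz : Q * Rv - R = 0 := by
      by_contra h
      have h1 := Polynomial.natDegree_le_of_dvd hdvd2 h
      rw [Polynomial.natDegree_X_pow] at h1
      have h2 : (Q * Rv - R).natDegree ≤ D := by
        refine le_trans (Polynomial.natDegree_sub_le _ _) (max_le ?_ ?_)
        · exact le_trans (Polynomial.natDegree_mul_le) (by omega)
        · omega
      omega
    exact sub_eq_zero.mp hz
  · -- case N₁ = N₂ : kernel is trivial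
    have heq : N₁ = N₂ := le_antisymm hN hge
    have hdim' := hdim N₂ hN2pos hDk
    have hzero : Module.finrank K (LinearMap.ker ((hankel a D N₂).mulVecLin)) = 0 := by
      rw [hdim']
      omega
    have hbot : LinearMap.ker ((hankel a D N₂).mulVecLin) = ⊥ :=
      Submodule.finrank_eq_zero.mp hzero
    have hmem : (fun j : Fin (N₂ + 1) => U.coeff (N₂ - j.1))
        ∈ LinearMap.ker ((hankel a D N₂).mulVecLin) := by
      rw [LinearMap.mem_ker, Matrix.mulVecLin_apply]
      exact hkerU
    rw [hbot, Submodule.mem_bot] at hmem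
    have hU0 : U = 0 := by
      ext m
      rcases Nat.lt_or_ge N₂ m with h | h
      · simp [Polynomial.coeff_eq_zero_of_natDegree_lt (by omega : U.natDegree < m)]
      · have := congrFun hmem ⟨N₂ - m, by omega⟩
        simp only [Pi.zero_apply] at this
        have e : N₂ - (N₂ - m) = m := by omega
        rw [e] at this
        simp [this]
    have hR0 : R = 0 := by
      have hdvdR : (Polynomial.X : Polynomial K) ^ (D + 1) ∣ R := by
        have := dvd_neg.mpr hrec
        rw [hU0] at this
        simpa using this
      by_contra h
      have h1 := Polynomial.natDegree_le_of_dvd hdvdR h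
      rw [Polynomial.natDegree_X_pow] at h1
      omega
    exact ⟨0, by simp [hU0], by simp [hR0]⟩
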